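/- Let n ≥ 1, let M : ℂ → ℂ^{n×n} be differentiable at λ ∈ ℂ, let σ ∈ ℂ with S := M(σ) invertible, and let v, c ∈ ℂⁿ with M(λ)v = 0 and c^H v = 1. Define the row vector w^H := c^H S⁻¹, assume w^H M'(λ) v ≠ 0, and set α := 1/(w^H M'(λ) v), q := S⁻¹ M'(λ) v, C := (I − α q c^H) S⁻¹ (S − M(λ)), and B := (I − v c^H) S⁻¹ [S − M(λ) + α · M'(λ)v · (w^H M(λ))]. Then C and B have the same nonzero eigenvalues. (Hence the convergence factors of QN2 and of residual inverse iteration, QN3, coincide.) -/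

import Mathlib

open Matrix

section helpers

variable {n : ℕ}

private lemma mul_vecMulVec' (A : Matrix (Fin n) (Fin n) ℂ) (a b : Fin n → ℂ) :
    A * vecMulVec a b = vecMulVec (A *ᵥ a) b := by
  ext i j
  simp [Matrix.mul_apply, vecMulVec_apply, mulVec, dotProduct, Finset.sum_mul, mul_assoc]

private lemma vecMulVec_mul' (A : Matrix (Fin n) (Fin n) ℂ) (a b : Fin n → ℂ) :
    vecMulVec a b * A = vecMulVec a (b ᵥ* A) := by
  ext i j
  simp [Matrix.mul_apply, vecMulVec_apply, vecMul, dotProduct, Finset.mul_sum, mul_assoc]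

private lemma vecMul_vecMulVec' (x a b : Fin n → ℂ) :
    x ᵥ* vecMulVec a b = (x ⬝ᵥ a) • b := by
  ext j
  simp [vecMul, vecMulVec_apply, dotProduct, Finset.sum_mul, mul_assoc]

private lemma vecMulVec_smul_right (s : ℂ) (a b : Fin n → ℂ) :
    vecMulVec a (s • b) = s • vecMulVec a b := by
  ext i j
  simp [vecMulVec_apply]
  ring

private lemma vecMulVec_zero_right (a : Fin n → ℂ) :
    vecMulVec a (0 : Fin n → ℂ) = 0 := by
  ext i j
  simp [vecMulVec_apply]

private lemma vecMulVec_mulVec' (a b x : Fin n → ℂ) :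
    vecMulVec a b *ᵥ x = (b ⬝ᵥ x) • a := by
  ext i
  simp only [mulVec, vecMulVec_apply, dotProduct, Pi.smul_apply, smul_eq_mul,
    Finset.sum_mul]
  exact Finset.sum_congr rfl fun k _ => by ring

private lemma vecMulVec_smul_left (s : ℂ) (a b : Fin n → ℂ) :
    vecMulVec (s • a) b = s • vecMulVec a b := by
  ext i j
  simp [vecMulVec_apply]
  ring

private lemma vecMulVec_zero_left (a : Fin n → ℂ) :
    vecMulVec (0 : Fin n → ℂ) a = 0 := by
  ext i j
  simp [vecMulVec_apply]

end helpers

/-- (Corollary 3.3) The (1,1)-block `C` of the QN2 iteration matrix and the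
residual inverse iteration matrix `B` of Jarlebring–Michiels have the same nonzero
eigenvalues: hence the convergence factors of QN2 and QN3 coincide. -/
theorem qn2_resinv_same_convergence_factor (n : ℕ) (hn : 1 ≤ n)
    (M : ℂ → Matrix (Fin n) (Fin n) ℂ) (lam σ : ℂ)
    (Mp : Matrix (Fin n) (Fin n) ℂ)
    (hMp : ∀ i j, HasDerivAt (fun t : ℂ => M t i j) (Mp i j) lam)
    (hS : IsUnit (M σ)) (v c : Fin n → ℂ)
    (hv : M lam *ᵥ v = 0) (hc : star c ⬝ᵥ v = 1)
    (w : Fin n → ℂ) (hw : w = star c ᵥ* (M σ)⁻¹)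
    (hwd : w ⬝ᵥ (Mp *ᵥ v) ≠ 0)
    (α : ℂ) (hα : α = (w ⬝ᵥ (Mp *ᵥ v))⁻¹)
    (q : Fin n → ℂ) (hq : q = (M σ)⁻¹ *ᵥ (Mp *ᵥ v))
    (C B : Matrix (Fin n) (Fin n) ℂ)
    (hCdef : C = (1 - α • vecMulVec q (star c)) * (M σ)⁻¹ * (M σ - M lam))
    (hBdef : B = (1 - vecMulVec v (star c)) * (M σ)⁻¹ *
      (M σ - M lam + α • vecMulVec (Mp *ᵥ v) (w ᵥ* M lam))) :
    ∀ γ : ℂ, γ ≠ 0 → (γ ∈ spectrum ℂ C ↔ γ ∈ spectrum ℂ B) := by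
  have hdet : IsUnit (M σ).det := (Matrix.isUnit_iff_isUnit_det _).mp hS
  have hSS : (M σ)⁻¹ * M σ = 1 := Matrix.nonsing_inv_mul _ hdet
  subst hw hq
  have hα1 : α * (star c ᵥ* (M σ)⁻¹ ⬝ᵥ (Mp *ᵥ v)) = 1 := by
    rw [hα, inv_mul_cancel₀ hwd]
  have hs1 : star c ᵥ* ((M σ)⁻¹ * Mp) ⬝ᵥ v = star c ᵥ* (M σ)⁻¹ ⬝ᵥ (Mp *ᵥ v) := by
    rw [← Matrix.vecMul_vecMul, ← Matrix.dotProduct_mulVec]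
  have hs2 : star c ⬝ᵥ (((M σ)⁻¹ * Mp) *ᵥ v) = star c ᵥ* (M σ)⁻¹ ⬝ᵥ (Mp *ᵥ v) := by
    rw [← Matrix.mulVec_mulVec, Matrix.dotProduct_mulVec]
  have hs3 : star c ᵥ* ((M σ)⁻¹ * M lam) ⬝ᵥ v = 0 := by
    rw [← Matrix.vecMul_vecMul, ← Matrix.dotProduct_mulVec, hv, dotProduct_zero]
  -- B = C * (1 - v cᴴ)
  have hBC : B = C * (1 - vecMulVec v (star c)) := by
    rw [hBdef, hCdef]
    simp only [mul_sub, sub_mul, mul_add, add_mul, mul_one, one_mul,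
      smul_mul_assoc, mul_smul_comm, mul_assoc, hSS,
      mul_vecMulVec', vecMulVec_mul', vecMul_vecMulVec',
      Matrix.vecMul_vecMul, Matrix.mulVec_mulVec, Matrix.vecMul_one,
      Matrix.one_mulVec, hv, Matrix.mulVec_zero, vecMulVec_zero_left,
      vecMulVec_smul_right, vecMulVec_mulVec', vecMulVec_smul_left, mul_zero,
      hs1, hs2, hs3, hc]
    match_scalars
    all_goals try ring
    all_goals rw [hα1]
    all_goals norm_num
  -- (1 - v cᴴ) * C = C
  have hPC : (1 - vecMulVec v (star c)) * C = C := by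
    rw [hCdef]
    simp only [mul_sub, sub_mul, mul_add, add_mul, mul_one, one_mul,
      smul_mul_assoc, mul_smul_comm, mul_assoc, hSS,
      mul_vecMulVec', vecMulVec_mul', vecMul_vecMulVec',
      Matrix.vecMul_vecMul, Matrix.mulVec_mulVec, Matrix.vecMul_one,
      Matrix.one_mulVec, hv, Matrix.mulVec_zero, vecMulVec_zero_left,
      vecMulVec_smul_right, vecMulVec_mulVec', vecMulVec_smul_left, mul_zero,
      hs1, hs2, hs3, hc]
    match_scalars
    all_goals try ring
    all_goals rw [hα1]
    all_goals norm_num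
  intro γ hγ
  have key := spectrum.nonzero_mul_comm (𝕜 := ℂ) C (1 - vecMulVec v (star c))
  rw [hPC, ← hBC] at key
  constructor
  · intro h
    have : γ ∈ spectrum ℂ C \ {0} := ⟨h, by simpa using hγ⟩
    rw [← key] at this
    exact this.1
  · intro h
    have : γ ∈ spectrum ℂ B \ {0} := ⟨h, by simpa using hγ⟩
    rw [key] at this
    exact this.1
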